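/- Let p, q be unit quaternions, Λ ∈ ℝ, and let Z = (U,V) be a tangent vector to S³×S³ at (p,q) with g(Z,Z) = 1 and PZ = cos(2Λ + 2π/3) Z + sin(2Λ + 2π/3) JZ. Then ⟨U,U⟩ = sin²Λ (Euclidean squared length of the projection of Z to the first factor). -/

import Mathlib

noncomputable section

open Quaternion

/-- Euclidean inner product on the quaternions: `⟨x,y⟩ = Re (x * star y)`. -/
def ipQ (x y : ℍ[ℝ]) : ℝ := (x * star y).re

/-- Euclidean inner product on pairs of quaternions. -/
def ip2Q (Z W : ℍ[ℝ] × ℍ[ℝ]) : ℝ := ipQ Z.1 W.1 + ipQ Z.2 W.2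

/-- The almost complex structure `J` of the nearly Kähler `S³ × S³` at `(p,q)`:
`J(U,V) = (1/√3)(2pq⁻¹V − U, −2qp⁻¹U + V)`. -/
def Jmap (p q : ℍ[ℝ]) (Z : ℍ[ℝ] × ℍ[ℝ]) : ℍ[ℝ] × ℍ[ℝ] :=
  ((Real.sqrt 3)⁻¹ • ((2 : ℝ) • (p * q⁻¹ * Z.2) - Z.1),
   (Real.sqrt 3)⁻¹ • (-((2 : ℝ) • (q * p⁻¹ * Z.1)) + Z.2))

/-- The nearly Kähler metric `g(Z,Z') = ½(⟨Z,Z'⟩ + ⟨JZ,JZ'⟩)`. -/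
def gmet (p q : ℍ[ℝ]) (Z W : ℍ[ℝ] × ℍ[ℝ]) : ℝ :=
  (1 / 2) * (ip2Q Z W + ip2Q (Jmap p q Z) (Jmap p q W))

/-- The almost product structure `P(U,V) = (pq⁻¹V, qp⁻¹U)`. -/
def Pmap (p q : ℍ[ℝ]) (Z : ℍ[ℝ] × ℍ[ℝ]) : ℍ[ℝ] × ℍ[ℝ] :=
  (p * q⁻¹ * Z.2, q * p⁻¹ * Z.1)

/-- The usual product structure `Q(U,V) = (−U, V)`. -/
def Qmap (Z : ℍ[ℝ] × ℍ[ℝ]) : ℍ[ℝ] × ℍ[ℝ] := (-Z.1, Z.2)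

/-- Cross product of (imaginary) quaternions: `α × β = ½(αβ − βα)`. -/
def crossQ (a b : ℍ[ℝ]) : ℍ[ℝ] := (1 / 2 : ℝ) • (a * b - b * a)

/-- The tensor `G = ∇̃J` at `(p,q)`, evaluated on tangent vectors `X = (pα, qβ)`,
`Y = (pγ, qδ)` (so `α = p⁻¹X₁`, etc.):
`G(X,Y) = (2/(3√3))(p(β×γ + α×δ + α×γ − 2β×δ), q(−α×δ − β×γ + 2α×γ − β×δ))`. -/
def Gmap (p q : ℍ[ℝ]) (X Y : ℍ[ℝ] × ℍ[ℝ]) : ℍ[ℝ] × ℍ[ℝ] :=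
  (2 / (3 * Real.sqrt 3) : ℝ) •
    ((p * (crossQ (q⁻¹ * X.2) (p⁻¹ * Y.1) + crossQ (p⁻¹ * X.1) (q⁻¹ * Y.2)
        + crossQ (p⁻¹ * X.1) (p⁻¹ * Y.1) - (2 : ℝ) • crossQ (q⁻¹ * X.2) (q⁻¹ * Y.2)),
      q * (-(crossQ (p⁻¹ * X.1) (q⁻¹ * Y.2)) - crossQ (q⁻¹ * X.2) (p⁻¹ * Y.1)
        + (2 : ℝ) • crossQ (p⁻¹ * X.1) (p⁻¹ * Y.1) - crossQ (q⁻¹ * X.2) (q⁻¹ * Y.2))))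

lemma re_cyc (x y : ℍ[ℝ]) : (x * y).re = (y * x).re := by
  rw [Quaternion.re_mul, Quaternion.re_mul]; ring

lemma ipQ_comm (x y : ℍ[ℝ]) : ipQ x y = ipQ y x := by
  unfold ipQ
  rw [← Quaternion.re_star (x * star y), star_mul, star_star, re_cyc]

lemma ipQ_add_left (x y z : ℍ[ℝ]) : ipQ (x + y) z = ipQ x z + ipQ y z := by
  simp [ipQ, add_mul]

lemma ipQ_add_right (x y z : ℍ[ℝ]) : ipQ x (y + z) = ipQ x y + ipQ x z := by
  simp [ipQ, mul_add]

lemma ipQ_smul_left (c : ℝ) (x z : ℍ[ℝ]) : ipQ (c • x) z = c * ipQ x z := by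
  simp [ipQ, smul_mul_assoc]

lemma ipQ_smul_right (c : ℝ) (x z : ℍ[ℝ]) : ipQ x (c • z) = c * ipQ x z := by
  simp [ipQ, mul_smul_comm]

lemma ipQ_sub_left (x y z : ℍ[ℝ]) : ipQ (x - y) z = ipQ x z - ipQ y z := by
  simp [ipQ, sub_mul]

lemma ipQ_sub_right (x y z : ℍ[ℝ]) : ipQ x (y - z) = ipQ x y - ipQ x z := by
  simp [ipQ, mul_sub]

lemma ipQ_neg_left (x z : ℍ[ℝ]) : ipQ (-x) z = - ipQ x z := by simp [ipQ]

lemma ipQ_neg_right (x z : ℍ[ℝ]) : ipQ x (-z) = - ipQ x z := by simp [ipQ]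

lemma ipQ_mul_mul (w x y : ℍ[ℝ]) (hw : normSq w = 1) :
    ipQ (w * x) (w * y) = ipQ x y := by
  unfold ipQ
  rw [star_mul]
  have h : w * x * (star y * star w) = w * (x * star y) * star w := by
    simp [mul_assoc]
  rw [h, re_cyc, ← mul_assoc, Quaternion.star_mul_self, hw]
  simp

lemma keyReal (a b t S C r c s : ℝ) (hr : r ^ 2 = 3) (hCS : S ^ 2 + C ^ 2 = 1)
    (hc : c = -(C ^ 2 - S ^ 2) / 2 - r * S * C)
    (hs : s = -(S * C) + r * (C ^ 2 - S ^ 2) / 2)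
    (hE1 : r * t = r * c * a + s * (2 * t - a))
    (hE2 : r * b = r * c * t + s * (2 * b - t))
    (hE1' : r * t = r * c * b + s * (b - 2 * t))
    (hE2' : r * a = r * c * t + s * (t - 2 * a))
    (hE3 : a + b - t = 3 / 4) : a = S ^ 2 := by
  subst hc; subst hs
  have h1 : (r * S + C) * (a * (r * C - S) + 2 * t * S) = 0 := by
    linear_combination hE1 + (t * r) * hCS
  have h2 : C * (a * (r * C - S) + 2 * t * S) = 0 := by
    linear_combination (1 / 2) * hE2' - (t * S * C / 2) * hr + (a * r / 2) * hCS
  have h3 : (2 * S ^ 2 + 1) * (a * (r * C - S) + 2 * t * S) = 0 := by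
    linear_combination (r * S) * h1 + (C - r * S) * h2
      - (a * (r * C - S) + 2 * t * S) * hCS - S ^ 2 * (a * (r * C - S) + 2 * t * S) * hr
  have hF : a * (r * C - S) + 2 * t * S = 0 := by
    rcases mul_eq_zero.mp h3 with h | h
    · nlinarith [sq_nonneg S]
    · exact h
  have h1g : (r * S + C) * (t * (r * C - S) + 2 * b * S) = 0 := by
    linear_combination hE2 + (b * r) * hCS
  have h2g : C * (t * (r * C - S) + 2 * b * S) = 0 := by
    linear_combination (1 / 2) * hE1' - (b * S * C / 2) * hr + (t * r / 2) * hCS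
  have h3g : (2 * S ^ 2 + 1) * (t * (r * C - S) + 2 * b * S) = 0 := by
    linear_combination (r * S) * h1g + (C - r * S) * h2g
      - (t * (r * C - S) + 2 * b * S) * hCS - S ^ 2 * (t * (r * C - S) + 2 * b * S) * hr
  have hG : t * (r * C - S) + 2 * b * S = 0 := by
    rcases mul_eq_zero.mp h3g with h | h
    · nlinarith [sq_nonneg S]
    · exact h
  linear_combination (4 * S ^ 2 / 3) * hE3 + ((r * C + S) / 3) * hF - (2 * S / 3) * hG
    - (a * C ^ 2 / 3) * hr - a * hCS

/-- a `g`-unit `P`-eigendirection with angle function `Λ + π/3`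
projects to the first factor with Euclidean squared length `sin²Λ`. -/
theorem stmt6 (p q : ℍ[ℝ]) (hp : ‖p‖ = 1) (hq : ‖q‖ = 1) (Λ : ℝ)
    (Z : ℍ[ℝ] × ℍ[ℝ]) (hZ1 : ipQ Z.1 p = 0) (hZ2 : ipQ Z.2 q = 0)
    (hunit : gmet p q Z Z = 1)
    (heig : Pmap p q Z =
      Real.cos (2 * Λ + 2 * Real.pi / 3) • Z
        + Real.sin (2 * Λ + 2 * Real.pi / 3) • Jmap p q Z) :
    ipQ Z.1 Z.1 = Real.sin Λ ^ 2 := by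
  have hp1 : p⁻¹ = star p := by
    rw [Quaternion.inv_def, normSq_eq_norm_mul_self, hp]; simp
  have hq1 : q⁻¹ = star q := by
    rw [Quaternion.inv_def, normSq_eq_norm_mul_self, hq]; simp
  have hnp : normSq p = 1 := by rw [normSq_eq_norm_mul_self, hp]; norm_num
  have hnq : normSq q = 1 := by rw [normSq_eq_norm_mul_self, hq]; norm_num
  have hnpq : normSq (p * q⁻¹) = 1 := by
    rw [map_mul, map_inv₀, hnp, hnq]; norm_num
  have hnqp : normSq (q * p⁻¹) = 1 := by
    rw [map_mul, map_inv₀, hnp, hnq]; norm_num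
  -- names
  set c := Real.cos (2 * Λ + 2 * Real.pi / 3) with hcdef
  set s := Real.sin (2 * Λ + 2 * Real.pi / 3) with hsdef
  set S := Real.sin Λ with hSdef
  set C := Real.cos Λ with hCdef
  set r := Real.sqrt 3 with hrdef
  have hr2 : r ^ 2 = 3 := Real.sq_sqrt (by norm_num)
  have hr0 : r ≠ 0 := by
    intro h; rw [h] at hr2; norm_num at hr2
  have hu : r⁻¹ * r⁻¹ = 1 / 3 := by
    rw [← mul_inv]
    rw [show r * r = 3 by nlinarith [hr2]]; norm_num
  have hCS : S ^ 2 + C ^ 2 = 1 := Real.sin_sq_add_cos_sq Λ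
  have hc23 : Real.cos (2 * Real.pi / 3) = -(1 / 2) := by
    rw [show (2 * Real.pi / 3 : ℝ) = Real.pi - Real.pi / 3 by ring, Real.cos_pi_sub,
      Real.cos_pi_div_three]
  have hs23 : Real.sin (2 * Real.pi / 3) = r / 2 := by
    rw [show (2 * Real.pi / 3 : ℝ) = Real.pi - Real.pi / 3 by ring, Real.sin_pi_sub,
      Real.sin_pi_div_three, hrdef]
  have hcos2 : Real.cos (2 * Λ) = C ^ 2 - S ^ 2 := by
    rw [show (2 * Λ : ℝ) = Λ + Λ by ring, Real.cos_add]; ring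
  have hsin2 : Real.sin (2 * Λ) = 2 * S * C := by
    rw [show (2 * Λ : ℝ) = Λ + Λ by ring, Real.sin_add]; ring
  have hc : c = -(C ^ 2 - S ^ 2) / 2 - r * S * C := by
    rw [hcdef, Real.cos_add, hcos2, hsin2, hc23, hs23]; ring
  have hs : s = -(S * C) + r * (C ^ 2 - S ^ 2) / 2 := by
    rw [hsdef, Real.sin_add, hcos2, hsin2, hc23, hs23]; ring
  -- component equations
  have hfst : p * q⁻¹ * Z.2 =
      c • Z.1 + s • (r⁻¹ • ((2 : ℝ) • (p * q⁻¹ * Z.2) - Z.1)) := by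
    have h := congrArg Prod.fst heig
    simpa [Pmap, Jmap] using h
  have hsnd : q * p⁻¹ * Z.1 =
      c • Z.2 + s • (r⁻¹ • (-((2 : ℝ) • (q * p⁻¹ * Z.1)) + Z.2)) := by
    have h := congrArg Prod.snd heig
    simpa [Pmap, Jmap] using h
  -- scalar quantities
  have hww : ipQ (p * q⁻¹ * Z.2) (p * q⁻¹ * Z.2) = ipQ Z.2 Z.2 :=
    ipQ_mul_mul _ _ _ hnpq
  have hvv : ipQ (q * p⁻¹ * Z.1) (q * p⁻¹ * Z.1) = ipQ Z.1 Z.1 :=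
    ipQ_mul_mul _ _ _ hnqp
  have hT : ipQ (q * p⁻¹ * Z.1) Z.2 = ipQ (p * q⁻¹ * Z.2) Z.1 := by
    rw [hp1, hq1]
    unfold ipQ
    rw [← Quaternion.re_star (q * star p * Z.1 * star Z.2)]
    simp only [star_mul, star_star]
    have h : Z.2 * (star Z.1 * (p * star q)) = Z.2 * star Z.1 * (p * star q) := by
      simp [mul_assoc]
    rw [mul_assoc, mul_assoc, h, re_cyc]
    simp [mul_assoc]
  have hcomm1 : ipQ Z.1 (p * q⁻¹ * Z.2) = ipQ (p * q⁻¹ * Z.2) Z.1 := ipQ_comm _ _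
  have hcomm2 : ipQ Z.2 (q * p⁻¹ * Z.1) = ipQ (q * p⁻¹ * Z.1) Z.2 := ipQ_comm _ _
  -- the four projected equations
  have e1 : ipQ (p * q⁻¹ * Z.2) Z.1 =
      c * ipQ Z.1 Z.1 + s * (r⁻¹ * (2 * ipQ (p * q⁻¹ * Z.2) Z.1 - ipQ Z.1 Z.1)) := by
    have h := congrArg (fun x => ipQ x Z.1) hfst
    simp only [ipQ_add_left, ipQ_smul_left, ipQ_sub_left, ipQ_neg_left] at h
    linear_combination h
  have e2 : ipQ Z.2 Z.2 =
      c * ipQ (p * q⁻¹ * Z.2) Z.1 + s * (r⁻¹ * (2 * ipQ Z.2 Z.2 - ipQ (p * q⁻¹ * Z.2) Z.1)) := by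
    have h := congrArg (fun x => ipQ x (p * q⁻¹ * Z.2)) hfst
    simp only [ipQ_add_left, ipQ_smul_left, ipQ_sub_left, ipQ_neg_left] at h
    rw [hww, hcomm1] at h
    linear_combination h
  have e1' : ipQ (p * q⁻¹ * Z.2) Z.1 =
      c * ipQ Z.2 Z.2 + s * (r⁻¹ * (ipQ Z.2 Z.2 - 2 * ipQ (p * q⁻¹ * Z.2) Z.1)) := by
    have h := congrArg (fun x => ipQ x Z.2) hsnd
    simp only [ipQ_add_left, ipQ_smul_left, ipQ_sub_left, ipQ_neg_left] at h
    rw [hT] at h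
    linear_combination h
  have e2' : ipQ Z.1 Z.1 =
      c * ipQ (p * q⁻¹ * Z.2) Z.1 + s * (r⁻¹ * (ipQ (p * q⁻¹ * Z.2) Z.1 - 2 * ipQ Z.1 Z.1)) := by
    have h := congrArg (fun x => ipQ x (q * p⁻¹ * Z.1)) hsnd
    simp only [ipQ_add_left, ipQ_smul_left, ipQ_sub_left, ipQ_neg_left] at h
    rw [hvv, hcomm2, hT] at h
    linear_combination h
  -- unit norm condition
  have hJ1 : ipQ (r⁻¹ • ((2 : ℝ) • (p * q⁻¹ * Z.2) - Z.1)) (r⁻¹ • ((2 : ℝ) • (p * q⁻¹ * Z.2) - Z.1))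
      = 1 / 3 * (4 * ipQ Z.2 Z.2 - 4 * ipQ (p * q⁻¹ * Z.2) Z.1 + ipQ Z.1 Z.1) := by
    simp only [ipQ_smul_left, ipQ_smul_right, ipQ_sub_left, ipQ_sub_right, hww, hcomm1]
    linear_combination (4 * ipQ Z.2 Z.2 - 4 * ipQ (p * q⁻¹ * Z.2) Z.1 + ipQ Z.1 Z.1) * hu
  have hJ2 : ipQ (r⁻¹ • (-((2 : ℝ) • (q * p⁻¹ * Z.1)) + Z.2)) (r⁻¹ • (-((2 : ℝ) • (q * p⁻¹ * Z.1)) + Z.2))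
      = 1 / 3 * (4 * ipQ Z.1 Z.1 - 4 * ipQ (p * q⁻¹ * Z.2) Z.1 + ipQ Z.2 Z.2) := by
    simp only [ipQ_smul_left, ipQ_smul_right, ipQ_add_left, ipQ_add_right, ipQ_neg_left,
      ipQ_neg_right, hvv, hcomm2, hT]
    linear_combination (4 * ipQ Z.1 Z.1 - 4 * ipQ (p * q⁻¹ * Z.2) Z.1 + ipQ Z.2 Z.2) * hu
  have e3 : ipQ Z.1 Z.1 + ipQ Z.2 Z.2 - ipQ (p * q⁻¹ * Z.2) Z.1 = 3 / 4 := by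
    unfold gmet ip2Q Jmap at hunit
    simp only at hunit
    rw [hJ1, hJ2] at hunit
    linarith
  -- multiply projected equations by r and finish
  have hru : r * r⁻¹ = 1 := mul_inv_cancel₀ hr0
  refine keyReal (ipQ Z.1 Z.1) (ipQ Z.2 Z.2) (ipQ (p * q⁻¹ * Z.2) Z.1) S C r c s hr2 hCS hc hs
    ?_ ?_ ?_ ?_ e3
  · linear_combination r * e1 + s * (2 * ipQ (p * q⁻¹ * Z.2) Z.1 - ipQ Z.1 Z.1) * hru
  · linear_combination r * e2 + s * (2 * ipQ Z.2 Z.2 - ipQ (p * q⁻¹ * Z.2) Z.1) * hru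
  · linear_combination r * e1' + s * (ipQ Z.2 Z.2 - 2 * ipQ (p * q⁻¹ * Z.2) Z.1) * hru
  · linear_combination r * e2' + s * (ipQ (p * q⁻¹ * Z.2) Z.1 - 2 * ipQ Z.1 Z.1) * hru
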